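/- Let X, X', Y, Y' be n×n symmetric matrices over ℂ with X and X' invertible, and assume X⁻¹Y is diagonalizable. Then there exists P ∈ GL(n,ℂ) with PᵀXP = X' and PᵀYP = Y' if and only if the matrices X⁻¹Y and X'⁻¹Y' are similar (i.e. there exists S ∈ GL(n,ℂ) with S⁻¹(X⁻¹Y)S = X'⁻¹Y'). -/

import Mathlib

open Matrix Polynomial

private lemma local_sqrt (l : ℂ) (hl : l ≠ 0) (m : ℕ) (hm : 1 ≤ m) :
    ∃ q : ℂ[X], (X - C l) ^ m ∣ q ^ 2 - X := by
  induction m, hm using Nat.le_induction with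
  | base =>
      obtain ⟨c, hc⟩ := IsAlgClosed.exists_pow_nat_eq l (n := 2) (by norm_num)
      refine ⟨C c, ?_⟩
      have : (C c : ℂ[X]) ^ 2 - X = -((X - C l) ^ 1) := by
        rw [← map_pow, hc]; ring
      rw [this]
      exact dvd_neg.mpr dvd_rfl
  | succ m hm ih =>
      obtain ⟨q, hq⟩ := ih
      have heval : q.eval l ^ 2 = l := by
        obtain ⟨k, hk⟩ := hq
        have := congrArg (Polynomial.eval l) hk
        simp only [eval_sub, eval_pow, eval_X, eval_mul, eval_sub, eval_C, sub_self,
          zero_pow (by omega : m ≠ 0), zero_mul] at this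
        linear_combination this
      have hqe : q.eval l ≠ 0 := by
        intro h; rw [h] at heval; simp at heval; exact hl heval.symm
      set r : ℂ[X] := C ((2 * q.eval l)⁻¹) with hr
      refine ⟨q - (q ^ 2 - X) * r, ?_⟩
      have hsplit : (q - (q ^ 2 - X) * r) ^ 2 - X
          = (q ^ 2 - X) * (1 - 2 * q * r) + (q ^ 2 - X) ^ 2 * r ^ 2 := by ring
      rw [hsplit]
      apply dvd_add
      · rw [pow_succ]
        apply mul_dvd_mul hq
        rw [dvd_iff_isRoot]
        have h2 : (2 : ℂ) * q.eval l ≠ 0 := by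
          simp only [ne_eq, mul_eq_zero, not_or]; exact ⟨two_ne_zero, hqe⟩
        simp only [IsRoot.def, hr, eval_sub, eval_mul, eval_one, eval_C, eval_X,
          eval_pow, eval_ofNat]
        field_simp
        simp
      · have h1 : ((X - C l) ^ m) ^ 2 ∣ (q ^ 2 - X) ^ 2 := pow_dvd_pow_of_dvd hq 2
        have h2 : (X - C l) ^ (m + 1) ∣ ((X - C l) ^ m) ^ 2 := by
          rw [← pow_mul]; exact pow_dvd_pow _ (by omega)
        exact (h2.trans h1).mul_right _

private lemma sqrt_mod_poly (N : ℕ) : ∀ p : ℂ[X], p.natDegree ≤ N → p.Monic →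
    p.eval 0 ≠ 0 → ∃ q : ℂ[X], p ∣ q ^ 2 - X := by
  induction N with
  | zero =>
      intro p hd hm _
      rw [hm.natDegree_eq_zero.mp (Nat.le_zero.mp hd)]
      exact ⟨X, one_dvd _⟩
  | succ N ih =>
      intro p hd hm h0
      by_cases h1 : p.natDegree = 0
      · rw [hm.natDegree_eq_zero.mp h1]; exact ⟨X, one_dvd _⟩
      · have hdeg : p.degree ≠ 0 := by
          rw [degree_eq_natDegree hm.ne_zero]
          exact_mod_cast h1
        have hsp : p.Splits := IsAlgClosed.splits p
        obtain ⟨l, hl⟩ := hsp.exists_eval_eq_zero hdeg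
        have hl0 : l ≠ 0 := by rintro rfl; exact h0 hl
        obtain ⟨g, hpg, hgl⟩ := p.exists_eq_pow_rootMultiplicity_mul_and_not_dvd hm.ne_zero l
        set m := p.rootMultiplicity l with hmdef
        have hm1 : 1 ≤ m := (rootMultiplicity_pos hm.ne_zero).mpr hl
        have hXm : ((X - C l) ^ m).Monic := (monic_X_sub_C l).pow m
        have hgm : g.Monic := hXm.of_mul_monic_left (hpg ▸ hm)
        have hg0 : g.eval 0 ≠ 0 := by
          intro h; apply h0
          rw [hpg, eval_mul, h, mul_zero]
        have hdg : g.natDegree ≤ N := by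
          have hnd : p.natDegree = m + g.natDegree := by
            rw [hpg, natDegree_mul hXm.ne_zero hgm.ne_zero, natDegree_pow,
              natDegree_X_sub_C, mul_one]
          omega
        obtain ⟨q₂, hq₂⟩ := ih g hdg hgm hg0
        obtain ⟨q₁, hq₁⟩ := local_sqrt l hl0 m hm1
        have hcop : IsCoprime ((X - C l) ^ m) g :=
          ((irreducible_X_sub_C l).coprime_iff_not_dvd.mpr hgl).pow_left
        obtain ⟨u, v, huv⟩ := id hcop
        set q : ℂ[X] := q₁ * v * g + q₂ * u * (X - C l) ^ m with hqdef
        have hd1 : (X - C l) ^ m ∣ q - q₁ :=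
          ⟨(q₂ - q₁) * u, by rw [hqdef]; linear_combination q₁ * huv⟩
        have hd2 : g ∣ q - q₂ :=
          ⟨(q₁ - q₂) * v, by rw [hqdef]; linear_combination q₂ * huv⟩
        refine ⟨q, ?_⟩
        rw [hpg]
        apply hcop.mul_dvd
        · have : q ^ 2 - X = (q + q₁) * (q - q₁) + (q₁ ^ 2 - X) := by ring
          rw [this]
          exact dvd_add (hd1.mul_left _) hq₁
        · have : q ^ 2 - X = (q + q₂) * (q - q₂) + (q₂ ^ 2 - X) := by ring
          rw [this]
          exact dvd_add (hd2.mul_left _) hq₂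

private lemma matrix_poly_sqrt {n : ℕ} (U : Matrix (Fin n) (Fin n) ℂ) (hU : IsUnit U.det) :
    ∃ q : ℂ[X], (aeval U q) * (aeval U q) = U := by
  have h0 : U.charpoly.eval 0 ≠ 0 := by
    intro h
    exact hU.ne_zero (by
      rw [Matrix.det_eq_sign_charpoly_coeff, Polynomial.coeff_zero_eq_eval_zero, h, mul_zero])
  obtain ⟨q, c, hc⟩ := sqrt_mod_poly U.charpoly.natDegree U.charpoly le_rfl
    U.charpoly_monic h0
  refine ⟨q, ?_⟩
  have h := congrArg (aeval U) hc
  simp only [map_sub, map_pow, _root_.map_mul, aeval_X, Matrix.aeval_self_charpoly, zero_mul] at h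
  have := sub_eq_zero.mp h
  rw [← sq, this]

private lemma aeval_comm {n : ℕ} (q : ℂ[X]) (U W : Matrix (Fin n) (Fin n) ℂ)
    (h : U * W = W * U) : (aeval U q) * W = W * (aeval U q) := by
  induction q using Polynomial.induction_on' with
  | add p r hp hr => simp only [map_add, add_mul, mul_add, hp, hr]
  | monomial k c =>
      have hk : U ^ k * W = W * U ^ k := (Commute.pow_left h k)
      rw [aeval_monomial, mul_assoc, hk, ← mul_assoc, Algebra.commutes, mul_assoc]

private lemma aeval_transpose_comm {n : ℕ} (q : ℂ[X]) (U M : Matrix (Fin n) (Fin n) ℂ)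
    (h : Uᵀ * M = M * U) : (aeval U q)ᵀ * M = M * aeval U q := by
  induction q using Polynomial.induction_on' with
  | add p r hp hr => simp only [map_add, transpose_add, add_mul, mul_add, hp, hr]
  | monomial k c =>
      have hk : (U ^ k)ᵀ * M = M * U ^ k := by
        induction k with
        | zero => simp
        | succ k ihk =>
            rw [pow_succ, transpose_mul, mul_assoc, ihk, ← mul_assoc, h, mul_assoc, ← pow_succ', ← pow_succ]
      rw [aeval_monomial, Algebra.algebraMap_eq_smul_one, smul_mul_assoc, one_mul,
        transpose_smul, smul_mul_assoc, hk, mul_smul_comm]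

private lemma comm_of_symm_symm_diag {n : ℕ} (M D : Matrix (Fin n) (Fin n) ℂ)
    (hM : M.IsSymm) (hMD : (M * D).IsSymm) (hD : D.IsDiag) : M * D = D * M := by
  have key : ∀ (A : Matrix (Fin n) (Fin n) ℂ) i j, (A * D) i j = A i j * D j j := by
    intro A i j
    rw [Matrix.mul_apply]
    exact Finset.sum_eq_single j (fun k _ hk => by rw [hD hk, mul_zero]) (by simp)
  have key2 : ∀ (A : Matrix (Fin n) (Fin n) ℂ) i j, (D * A) i j = D i i * A i j := by
    intro A i j
    rw [Matrix.mul_apply]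
    exact Finset.sum_eq_single i (fun k _ hk => by rw [hD (Ne.symm hk), zero_mul]) (by simp)
  ext i j
  rw [key, key2]
  have h1 := hMD.apply i j
  rw [key, key] at h1
  rw [← h1, hM.apply i j, mul_comm]

theorem pair_equivalent_iff_similar (n : ℕ)
    (X X' Y Y' : Matrix (Fin n) (Fin n) ℂ)
    (hX : X.IsSymm) (hX' : X'.IsSymm) (hY : Y.IsSymm) (hY' : Y'.IsSymm)
    (hXu : IsUnit X.det) (hX'u : IsUnit X'.det)
    (hdiag : ∃ R : Matrix (Fin n) (Fin n) ℂ, IsUnit R.det ∧ (R⁻¹ * (X⁻¹ * Y) * R).IsDiag) :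
    (∃ P : Matrix (Fin n) (Fin n) ℂ, IsUnit P.det ∧ Pᵀ * X * P = X' ∧ Pᵀ * Y * P = Y') ↔
    (∃ S : Matrix (Fin n) (Fin n) ℂ, IsUnit S.det ∧ S⁻¹ * (X⁻¹ * Y) * S = X'⁻¹ * Y') := by
  constructor
  · rintro ⟨P, hP, hPX, hPY⟩
    have hPt : IsUnit Pᵀ.det := by rwa [Matrix.det_transpose]
    refine ⟨P, hP, ?_⟩
    rw [← hPX, ← hPY, Matrix.mul_inv_rev, Matrix.mul_inv_rev]
    simp only [Matrix.mul_assoc]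
    rw [Matrix.nonsing_inv_mul_cancel_left _ _ hPt]
  · rintro ⟨S, hS, hsim⟩
    obtain ⟨R, hR, hDdiag⟩ := hdiag
    set A := X⁻¹ * Y with hAdef
    set A' := X'⁻¹ * Y' with hA'def
    set D := R⁻¹ * A * R with hDdef
    set R' := S⁻¹ * R with hR'def
    have hR'u : IsUnit R'.det := by
      rw [hR'def, Matrix.det_mul]
      exact (Matrix.isUnit_nonsing_inv_det _ hS).mul hR
    have hAR : A * R = R * D := by
      rw [hDdef, ← Matrix.mul_assoc, ← Matrix.mul_assoc, Matrix.mul_nonsing_inv _ hR, one_mul]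
    have hA'R' : A' * R' = R' * D := by
      rw [← hsim, hR'def]
      simp only [Matrix.mul_assoc]
      rw [Matrix.mul_nonsing_inv_cancel_left _ _ hS, hAR]
    have hXA : X * A = Y := by rw [hAdef, Matrix.mul_nonsing_inv_cancel_left _ _ hXu]
    have hX'A' : X' * A' = Y' := by rw [hA'def, Matrix.mul_nonsing_inv_cancel_left _ _ hX'u]
    set Xt := Rᵀ * (X * R) with hXtdef
    set Xt' := R'ᵀ * (X' * R') with hXt'def
    have hXtu : IsUnit Xt.det := by
      rw [hXtdef]
      simp only [Matrix.det_mul, Matrix.det_transpose]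
      exact hR.mul (hXu.mul hR)
    have hXt'u : IsUnit Xt'.det := by
      rw [hXt'def]
      simp only [Matrix.det_mul, Matrix.det_transpose]
      exact hR'u.mul (hX'u.mul hR'u)
    have hXts : Xtᵀ = Xt := by
      rw [hXtdef]
      simp only [transpose_mul, transpose_transpose, Matrix.mul_assoc, hX.eq]
    have hXt's : Xt'ᵀ = Xt' := by
      rw [hXt'def]
      simp only [transpose_mul, transpose_transpose, Matrix.mul_assoc, hX'.eq]
    have hXtD : Xt * D = Rᵀ * (Y * R) := by
      rw [hXtdef, Matrix.mul_assoc, Matrix.mul_assoc X R D, ← hAR, ← Matrix.mul_assoc X A R,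
        hXA]
    have hXt'D : Xt' * D = R'ᵀ * (Y' * R') := by
      rw [hXt'def, Matrix.mul_assoc, Matrix.mul_assoc X' R' D, ← hA'R',
        ← Matrix.mul_assoc X' A' R', hX'A']
    have hXtDs : (Xt * D).IsSymm := by
      show (Xt * D)ᵀ = Xt * D
      rw [hXtD]
      simp only [transpose_mul, transpose_transpose, Matrix.mul_assoc, hY.eq]
    have hXt'Ds : (Xt' * D).IsSymm := by
      show (Xt' * D)ᵀ = Xt' * D
      rw [hXt'D]
      simp only [transpose_mul, transpose_transpose, Matrix.mul_assoc, hY'.eq]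
    have hcXtD : Xt * D = D * Xt := comm_of_symm_symm_diag Xt D hXts hXtDs hDdiag
    have hcXt'D : Xt' * D = D * Xt' := comm_of_symm_symm_diag Xt' D hXt's hXt'Ds hDdiag
    have hXtiD : Xt⁻¹ * D = D * Xt⁻¹ := by
      have e1 : Xt⁻¹ * ((Xt * D) * Xt⁻¹) = D * Xt⁻¹ := by
        rw [← Matrix.mul_assoc, ← Matrix.mul_assoc, Matrix.nonsing_inv_mul _ hXtu, one_mul]
      have e2 : Xt⁻¹ * ((D * Xt) * Xt⁻¹) = Xt⁻¹ * D := by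
        rw [Matrix.mul_assoc D Xt Xt⁻¹, Matrix.mul_nonsing_inv _ hXtu, mul_one]
      rw [← e1, hcXtD, e2]
    set U := Xt⁻¹ * Xt' with hUdef
    have hUu : IsUnit U.det := by
      rw [hUdef, Matrix.det_mul]
      exact (Matrix.isUnit_nonsing_inv_det _ hXtu).mul hXt'u
    have hUD : U * D = D * U := by
      rw [hUdef, Matrix.mul_assoc, hcXt'D, ← Matrix.mul_assoc, hXtiD, Matrix.mul_assoc]
    have hXtU : Xt * U = Xt' := by rw [hUdef, Matrix.mul_nonsing_inv_cancel_left _ _ hXtu]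
    have hUs : Uᵀ * Xt = Xt * U := by
      rw [hUdef, transpose_mul, Matrix.transpose_nonsing_inv, hXts, hXt's,
        Matrix.mul_assoc, Matrix.nonsing_inv_mul _ hXtu, mul_one,
        Matrix.mul_nonsing_inv_cancel_left _ _ hXtu]
    obtain ⟨q, hq⟩ := matrix_poly_sqrt U hUu
    set T := aeval U q with hTdef
    have hTD : T * D = D * T := aeval_comm q U D hUD
    have hTXt : Tᵀ * Xt = Xt * T := aeval_transpose_comm q U Xt hUs
    have hTu : IsUnit T.det := by
      have hdet : T.det * T.det = U.det := by rw [← Matrix.det_mul, hq]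
      exact isUnit_of_mul_isUnit_left (hdet ▸ hUu)
    have cancel : ∀ M : Matrix (Fin n) (Fin n) ℂ,
        (R'⁻¹)ᵀ * (R'ᵀ * (M * R')) * R'⁻¹ = M := by
      intro M
      have h1 : (R'⁻¹)ᵀ * (R'ᵀ * (M * R')) * R'⁻¹ = (R' * R'⁻¹)ᵀ * (M * (R' * R'⁻¹)) := by
        simp only [transpose_mul, Matrix.mul_assoc]
      rw [h1, Matrix.mul_nonsing_inv _ hR'u, transpose_one, one_mul, mul_one]
    have key1 : Tᵀ * (Xt * T) = Xt * U := by
      rw [← Matrix.mul_assoc, hTXt, Matrix.mul_assoc, hq]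
    have key2 : Tᵀ * ((Xt * D) * T) = Xt' * D := by
      rw [← Matrix.mul_assoc, ← Matrix.mul_assoc, hTXt, Matrix.mul_assoc Xt T D, hTD,
        Matrix.mul_assoc Xt (D * T) T, Matrix.mul_assoc D T T, hq, ← hUD,
        ← Matrix.mul_assoc, hXtU]
    refine ⟨R * T * R'⁻¹, ?_, ?_, ?_⟩
    · simp only [Matrix.det_mul]
      exact (hR.mul hTu).mul (Matrix.isUnit_nonsing_inv_det _ hR'u)
    · have e : (R * T * R'⁻¹)ᵀ * X * (R * T * R'⁻¹)
          = (R'⁻¹)ᵀ * (Tᵀ * (Xt * T)) * R'⁻¹ := by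
        rw [hXtdef]
        simp only [transpose_mul, Matrix.mul_assoc]
      rw [e, key1, hXtU, hXt'def, cancel]
    · have e : (R * T * R'⁻¹)ᵀ * Y * (R * T * R'⁻¹)
          = (R'⁻¹)ᵀ * (Tᵀ * ((Xt * D) * T)) * R'⁻¹ := by
        rw [hXtD]
        simp only [transpose_mul, Matrix.mul_assoc]
      rw [e, key2, hXt'D, cancel]
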